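/- Let n ≥ 2 and let h ⊂ so(n) ⋉ g_- ⊂ so(1,n+1) be an indecomposable subalgebra containing g_- (type 2). If S ∈ Hom(V, g) satisfies [X, S(v)] = S(Xv) for all X ∈ h and v ∈ V, then S(e_-) = 0, S(x) ∈ g_- for every x ∈ V_0, S(e_+) ∈ p, and S(x)e_+ = −π_0(S(e_+))·x for all x ∈ V_0; moreover [π_0(h), π_0(S(e_+))] = 0 and π_0(h) annihilates π_-(S(e_+)). -/

import Mathlib

open scoped BigOperators

attribute [local instance 100] LieRing.ofAssociativeRing

/-- Minkowski space `ℝ^{1,n+1}` in a Witt basis, coordinates indexed by `Fin (n+2)`: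
index `0` is `e₋`, indices `1,…,n` are the Euclidean directions, index `n+1` is `e₊`. -/
abbrev Vm (n : ℕ) : Type := Fin (n + 2) → ℝ

def lastIx (n : ℕ) : Fin (n + 2) := Fin.last (n + 1)

def midIx (n : ℕ) (i : Fin n) : Fin (n + 2) := ⟨i.1 + 1, by omega⟩

/-- The Minkowski inner product in the Witt basis. -/
noncomputable def wB (n : ℕ) (u v : Vm n) : ℝ :=
  u 0 * v (lastIx n) + u (lastIx n) * v 0 + ∑ i : Fin n, u (midIx n i) * v (midIx n i)

noncomputable def eMinus (n : ℕ) : Vm n := Pi.single 0 1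
noncomputable def ePlus (n : ℕ) : Vm n := Pi.single (lastIx n) 1
noncomputable def eMid (n : ℕ) (i : Fin n) : Vm n := Pi.single (midIx n i) 1

/-- The embedding `ℝⁿ ≃ V₀ ⊆ V`. -/
noncomputable def vmid (n : ℕ) (c : Fin n → ℝ) : Vm n := ∑ i : Fin n, c i • eMid n i

/-- Membership in `so(1,n+1)`: skew-symmetry with respect to the Minkowski product. -/
def IsSkewB (n : ℕ) (A : Module.End ℝ (Vm n)) : Prop :=
  ∀ u v : Vm n, wB n (A u) v + wB n u (A v) = 0

/-- The element `v̄ ∈ 𝔤₋` associated with `v ∈ ℝⁿ`: `v̄ e₊ = v`, `v̄ eᵢ = -vᵢ e₋`, `v̄ e₋ = 0`. -/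
noncomputable def barE (n : ℕ) (v : Fin n → ℝ) : Module.End ℝ (Vm n) :=
  (LinearMap.proj (lastIx n) : Vm n →ₗ[ℝ] ℝ).smulRight (vmid n v)
    - (∑ i : Fin n, v i • (LinearMap.proj (midIx n i) : Vm n →ₗ[ℝ] ℝ)).smulRight (eMinus n)

/-- The `ℝ`-component of the projection of `X` to `𝔤₀ ≅ ℝ ⊕ so(n)`. -/
noncomputable def piR (n : ℕ) (X : Module.End ℝ (Vm n)) : ℝ :=
  wB n (X (eMinus n)) (ePlus n)

/-- The projection `π₋ : 𝔭 → 𝔤₋ ≅ ℝⁿ`. -/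
noncomputable def piMinusE (n : ℕ) (X : Module.End ℝ (Vm n)) : Fin n → ℝ :=
  fun i => wB n (X (ePlus n)) (eMid n i)

/-- The action of the `𝔤₀ ≅ 𝔠𝔬(n)`-projection `π₀(X)` of `X` on `ℝⁿ`. -/
noncomputable def pi0Act (n : ℕ) (X : Module.End ℝ (Vm n)) (c : Fin n → ℝ) : Fin n → ℝ :=
  fun j => piR n X * c j + ∑ i : Fin n, wB n (X (eMid n i)) (eMid n j) * c i

/-- Membership in the parabolic `𝔭 = stab(ℝ·e₋) ⊆ so(1,n+1)`. -/
def MemP (n : ℕ) (X : Module.End ℝ (Vm n)) : Prop :=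
  IsSkewB n X ∧ X (eMinus n) ∈ Submodule.span ℝ {eMinus n}

/-- Indecomposability: no nondegenerate invariant subspace other than `⊥` and `⊤`. -/
def Indecomp (n : ℕ) (h : LieSubalgebra ℝ (Module.End ℝ (Vm n))) : Prop :=
  ∀ W : Submodule ℝ (Vm n),
    (∀ X ∈ h, ∀ w ∈ W, X w ∈ W) →
    (∀ w ∈ W, (∀ w' ∈ W, wB n w w' = 0) → w = 0) →
    W = ⊥ ∨ W = ⊤

section Helpers
variable {n : ℕ}

lemma midIx_ne_zero (i : Fin n) : midIx n i ≠ 0 := by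
  simp [midIx, Fin.ext_iff]

lemma midIx_ne_last (i : Fin n) : midIx n i ≠ lastIx n := by
  have := i.2; simp [midIx, lastIx, Fin.ext_iff, Fin.last]; omega

lemma last_ne_zero : lastIx n ≠ 0 := by
  simp [lastIx, Fin.ext_iff, Fin.last]

lemma midIx_inj {i j : Fin n} (h : midIx n i = midIx n j) : i = j := by
  simpa [midIx, Fin.ext_iff] using h

lemma ix_cases (k : Fin (n + 2)) :
    k = 0 ∨ (∃ i : Fin n, k = midIx n i) ∨ k = lastIx n := by
  rcases k with ⟨kv, hk⟩
  rcases Nat.eq_zero_or_pos kv with h0 | h0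
  · left; simp [Fin.ext_iff, h0]
  rcases Nat.lt_or_ge kv (n + 1) with h1 | h1
  · right; left
    exact ⟨⟨kv - 1, by omega⟩, by simp [midIx, Fin.ext_iff]; omega⟩
  · right; right
    have : kv = n + 1 := by omega
    simp [lastIx, Fin.ext_iff, Fin.last, this]

@[simp] lemma eMinus_zero : eMinus n 0 = 1 := by simp [eMinus]
@[simp] lemma eMinus_mid (i : Fin n) : eMinus n (midIx n i) = 0 := by
  simp [eMinus, Pi.single_eq_of_ne (midIx_ne_zero i)]
@[simp] lemma eMinus_last : eMinus n (lastIx n) = 0 := by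
  simp [eMinus, Pi.single_eq_of_ne (last_ne_zero)]
@[simp] lemma ePlus_zero : ePlus n 0 = 0 := by
  simp [ePlus, Pi.single_eq_of_ne (Ne.symm last_ne_zero)]
@[simp] lemma ePlus_mid (i : Fin n) : ePlus n (midIx n i) = 0 := by
  simp [ePlus, Pi.single_eq_of_ne (midIx_ne_last i)]
@[simp] lemma ePlus_last : ePlus n (lastIx n) = 1 := by simp [ePlus]
@[simp] lemma eMid_zero (i : Fin n) : eMid n i 0 = 0 := by
  simp [eMid, Pi.single_eq_of_ne (Ne.symm (midIx_ne_zero i))]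
@[simp] lemma eMid_last (i : Fin n) : eMid n i (lastIx n) = 0 := by
  simp [eMid, Pi.single_eq_of_ne (Ne.symm (midIx_ne_last i))]
@[simp] lemma eMid_mid (i j : Fin n) : eMid n i (midIx n j) = if j = i then 1 else 0 := by
  by_cases h : j = i
  · subst h; simp [eMid, Pi.single_eq_same]
  · have : midIx n j ≠ midIx n i := fun hc => h (midIx_inj hc)
    simp [eMid, Pi.single_eq_of_ne this, h]

@[simp] lemma vmid_zero (c : Fin n → ℝ) : vmid n c 0 = 0 := by
  simp [vmid, Finset.sum_apply]
@[simp] lemma vmid_last (c : Fin n → ℝ) : vmid n c (lastIx n) = 0 := by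
  simp [vmid, Finset.sum_apply]
@[simp] lemma vmid_mid (c : Fin n → ℝ) (j : Fin n) : vmid n c (midIx n j) = c j := by
  simp [vmid, Finset.sum_apply, Finset.sum_ite_eq]

@[simp] lemma wB_eMinus_right (u : Vm n) : wB n u (eMinus n) = u (lastIx n) := by
  simp [wB]
@[simp] lemma wB_ePlus_right (u : Vm n) : wB n u (ePlus n) = u 0 := by
  simp [wB]
@[simp] lemma wB_eMid_right (u : Vm n) (j : Fin n) : wB n u (eMid n j) = u (midIx n j) := by
  simp [wB, mul_ite, Finset.sum_ite_eq]
@[simp] lemma wB_eMinus_left (u : Vm n) : wB n (eMinus n) u = u (lastIx n) := by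
  simp [wB]
@[simp] lemma wB_ePlus_left (u : Vm n) : wB n (ePlus n) u = u 0 := by
  simp [wB]
@[simp] lemma wB_eMid_left (u : Vm n) (j : Fin n) : wB n (eMid n j) u = u (midIx n j) := by
  simp [wB, ite_mul, Finset.sum_ite_eq]

lemma barE_apply (v : Fin n → ℝ) (u : Vm n) :
    barE n v u = u (lastIx n) • vmid n v - (∑ i : Fin n, v i * u (midIx n i)) • eMinus n := by
  simp [barE, LinearMap.sub_apply, LinearMap.smulRight_apply, LinearMap.sum_apply,
    LinearMap.smul_apply, smul_eq_mul]

@[simp] lemma barE_eMinus (v : Fin n → ℝ) : barE n v (eMinus n) = 0 := by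
  simp [barE_apply]

@[simp] lemma barE_eMid (v : Fin n → ℝ) (j : Fin n) :
    barE n v (eMid n j) = -(v j • eMinus n) := by
  simp [barE_apply, mul_ite, Finset.sum_ite_eq]

@[simp] lemma barE_ePlus (v : Fin n → ℝ) : barE n v (ePlus n) = vmid n v := by
  simp [barE_apply]

lemma vm_ext {u v : Vm n} (h0 : u 0 = v 0)
    (hm : ∀ i, u (midIx n i) = v (midIx n i)) (hl : u (lastIx n) = v (lastIx n)) : u = v := by
  funext k
  rcases ix_cases k with rfl | ⟨i, rfl⟩ | rfl
  · exact h0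
  · exact hm i
  · exact hl

lemma vm_decomp (u : Vm n) :
    u = u 0 • eMinus n + vmid n (fun i => u (midIx n i)) + u (lastIx n) • ePlus n := by
  apply vm_ext <;> simp

lemma end_ext {f g : Module.End ℝ (Vm n)} (h0 : f (eMinus n) = g (eMinus n))
    (hm : ∀ i, f (eMid n i) = g (eMid n i)) (hl : f (ePlus n) = g (ePlus n)) : f = g := by
  apply LinearMap.ext; intro u
  rw [show u = u 0 • eMinus n + vmid n (fun i => u (midIx n i)) + u (lastIx n) • ePlus n
    from vm_decomp u]
  simp only [vmid, map_add, map_smul, map_sum, h0, hl]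
  congr 1; congr 1; exact Finset.sum_congr rfl fun i _ => by rw [hm i]

end Helpers

section Key
variable {n : ℕ}

lemma lie_apply (X Y : Module.End ℝ (Vm n)) (u : Vm n) :
    ⁅X, Y⁆ u = X (Y u) - Y (X u) := by
  simp [Ring.lie_def, LinearMap.sub_apply, Module.End.mul_apply]

lemma barE_single_apply (k : Fin n) (u : Vm n) :
    barE n (Pi.single k 1) u = u (lastIx n) • eMid n k - u (midIx n k) • eMinus n := by
  rw [barE_apply]
  congr 1
  · congr 1
    apply vm_ext <;> simp [Pi.single_apply]
  · congr 1
    simp [Pi.single_apply, ite_mul, Finset.sum_ite_eq]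

lemma ker_barE (hn1 : 1 ≤ n) {u : Vm n} (h : ∀ v, barE n v u = 0) :
    u = u 0 • eMinus n := by
  have key : ∀ k : Fin n, u (lastIx n) • eMid n k - u (midIx n k) • eMinus n = 0 := by
    intro k; rw [← barE_single_apply]; exact h _
  have hlast : u (lastIx n) = 0 := by
    have := congrFun (key ⟨0, hn1⟩) (midIx n ⟨0, hn1⟩)
    simpa using this
  have hmid : ∀ k, u (midIx n k) = 0 := by
    intro k
    have := congrFun (key k) 0
    simpa using this
  apply vm_ext <;> simp [hlast, hmid]

lemma barE_zero : barE n (0 : Fin n → ℝ) = 0 := by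
  apply end_ext <;> simp [vmid]

lemma key_commutant (hn1 : 1 ≤ n) (A : Module.End ℝ (Vm n)) (hsk : IsSkewB n A)
    (hc : ∀ v u, barE n v (A u) = A (barE n v u)) :
    A = barE n (fun i => (A (ePlus n)) (midIx n i)) := by
  -- A e₋ is a multiple of e₋
  have hke : A (eMinus n) = (A (eMinus n)) 0 • eMinus n :=
    ker_barE hn1 (fun v => by rw [hc]; simp)
  set l : ℝ := (A (eMinus n)) 0 with hl
  -- last component of A eⱼ vanishes
  have hjlast : ∀ j, (A (eMid n j)) (lastIx n) = 0 := by
    intro j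
    have := hsk (eMinus n) (eMid n j)
    simp only [wB_eMid_right, wB_eMinus_left] at this
    rw [hke] at this; simpa using this
  -- mid components of A eⱼ
  have hjmid : ∀ j k, (A (eMid n j)) (midIx n k) = if j = k then l else 0 := by
    intro j k
    have h1 := hc (Pi.single k 1) (eMid n j)
    rw [barE_single_apply, barE_eMid] at h1
    rw [hjlast j] at h1
    have h2 := congrFun h1 0
    simp [Pi.single_apply, hke] at h2
    by_cases hjk : j = k <;> simp [hjk] at h2 ⊢ <;> linarith [h2]
  -- l = 0
  have hl0 : l = 0 := by
    have := hsk (eMid n ⟨0, hn1⟩) (eMid n ⟨0, hn1⟩)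
    simp only [wB_eMid_right, wB_eMid_left, hjmid] at this
    simp at this; linarith
  -- components of A e₊
  have hplast : (A (ePlus n)) (lastIx n) = 0 := by
    have := hsk (eMinus n) (ePlus n)
    simp only [wB_ePlus_right, wB_eMinus_left] at this
    rw [hke] at this; simp at this; rw [hl0] at this; linarith
  have hpzero : (A (ePlus n)) 0 = 0 := by
    have := hsk (ePlus n) (ePlus n)
    simp only [wB_ePlus_right, wB_ePlus_left] at this; linarith
  have hjzero : ∀ j, (A (eMid n j)) 0 = -(A (ePlus n)) (midIx n j) := by
    intro j
    have := hsk (eMid n j) (ePlus n)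
    simp only [wB_ePlus_right, wB_eMid_left] at this; linarith
  -- conclude
  apply end_ext
  · rw [hke, hl0]; simp
  · intro j
    apply vm_ext
    · simp [hjzero j]
    · intro k; simp [hjmid j k, hl0]
    · simp [hjlast j]
  · apply vm_ext
    · simp [hpzero]
    · intro k; simp
    · simp [hplast]

end Key

section Part1
variable {n : ℕ}

lemma seminus_zero (hn : 2 ≤ n) (S : Vm n →ₗ[ℝ] Module.End ℝ (Vm n))
    (hSskew : ∀ v : Vm n, IsSkewB n (S v))
    (heq : ∀ v : Fin n → ℝ, ∀ u : Vm n, ⁅barE n v, S u⁆ = S (barE n v u)) :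
    S (eMinus n) = 0 := by
  have hn1 : 1 ≤ n := le_trans one_le_two hn
  -- S e₋ commutes with all barE v
  have hcomm : ∀ v u, barE n v (S (eMinus n) u) = S (eMinus n) (barE n v u) := by
    intro v u
    have h1 := heq v (eMinus n)
    rw [barE_eMinus, map_zero] at h1
    have h2 : (⁅barE n v, S (eMinus n)⁆) u = 0 := by rw [h1]; rfl
    rw [lie_apply] at h2
    exact sub_eq_zero.mp h2
  have hA := key_commutant hn1 (S (eMinus n)) (hSskew _) hcomm
  set w : Fin n → ℝ := fun i => (S (eMinus n) (ePlus n)) (midIx n i) with hw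
  -- the bracket relation for S eᵢ
  have hcB : ∀ (i : Fin n) (v : Fin n → ℝ) (u : Vm n),
      barE n v (S (eMid n i) u) - S (eMid n i) (barE n v u) = -(v i) • (S (eMinus n) u) := by
    intro i v u
    have h1 := heq v (eMid n i)
    rw [barE_eMid, map_neg, map_smul] at h1
    have h2 := congrArg (fun (f : Module.End ℝ (Vm n)) => f u) h1
    simp only [lie_apply, LinearMap.neg_apply, LinearMap.smul_apply] at h2
    rw [h2]; simp
  -- S eᵢ e₋ is a multiple of e₋
  have hBe : ∀ i : Fin n, S (eMid n i) (eMinus n) = (S (eMid n i) (eMinus n)) 0 • eMinus n := by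
    intro i
    apply ker_barE hn1
    intro v
    have := hcB i v (eMinus n)
    rw [barE_eMinus, map_zero, sub_zero] at this
    rw [this, hA, barE_eMinus, smul_zero]
  -- last components vanish
  have hBlast : ∀ i j : Fin n, (S (eMid n i) (eMid n j)) (lastIx n) = 0 := by
    intro i j
    have := hSskew (eMid n i) (eMinus n) (eMid n j)
    simp only [wB_eMid_right, wB_eMinus_left] at this
    rw [hBe i] at this; simpa using this
  -- mid components
  have hBmid : ∀ i j k : Fin n, (S (eMid n i) (eMid n j)) (midIx n k) =
      (if j = k then (S (eMid n i) (eMinus n)) 0 else 0) - (if i = k then w j else 0) := by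
    intro i j k
    have h1 := hcB i (Pi.single k 1) (eMid n j)
    rw [barE_single_apply] at h1
    have h2 := congrFun h1 0
    have hAj : S (eMinus n) (eMid n j) = -(w j • eMinus n) := by rw [hA]; exact barE_eMid _ _
    rw [barE_eMid, map_neg, map_smul, hBe i, hAj] at h2
    simp only [Pi.sub_apply, Pi.smul_apply, Pi.neg_apply, smul_eq_mul, Pi.single_apply,
      eMid_zero, eMinus_zero, hBlast] at h2
    by_cases hjk : j = k <;> by_cases hik : i = k <;>
      simp [hjk, hik] at h2 ⊢ <;> linarith
  -- skew symmetry of mid block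
  have hBsk : ∀ i j k : Fin n,
      (S (eMid n i) (eMid n j)) (midIx n k) + (S (eMid n i) (eMid n k)) (midIx n j) = 0 := by
    intro i j k
    have := hSskew (eMid n i) (eMid n j) (eMid n k)
    simpa using this
  -- diagonal coefficients vanish
  have hl0 : ∀ i : Fin n, (S (eMid n i) (eMinus n)) 0 = 0 := by
    intro i
    obtain ⟨j, hij⟩ : ∃ j : Fin n, i ≠ j := by
      by_cases h0 : i.1 = 0
      · exact ⟨⟨1, by omega⟩, by simp [Fin.ext_iff, h0]⟩
      · exact ⟨⟨0, by omega⟩, by simp [Fin.ext_iff, h0]⟩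
    have h1 := hBsk i j j
    rw [hBmid i j j] at h1
    simp [hij] at h1
    linarith
  -- w = 0
  have hw0 : ∀ i : Fin n, w i = 0 := by
    intro i
    have h1 := hBsk i i i
    rw [hBmid i i i] at h1
    simp [hl0 i] at h1
    linarith
  have : w = 0 := funext fun i => hw0 i
  rw [hA, this, barE_zero]

end Part1

section MainAux
variable {n : ℕ}

lemma map_vmid {M : Type*} [AddCommMonoid M] [Module ℝ M] (f : Vm n →ₗ[ℝ] M)
    (c : Fin n → ℝ) : f (vmid n c) = ∑ i : Fin n, c i • f (eMid n i) := by
  simp [vmid, map_sum, map_smul]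

end MainAux

/-- Let `n ≥ 2` and let `𝔥 ⊆ so(n) ⋉ 𝔤₋ ⊂ so(1,n+1)` be an indecomposable
subalgebra containing `𝔤₋` (type 2). If `S ∈ Hom(V, 𝔤)` satisfies `[X, S(v)] = S(Xv)` for all
`X ∈ 𝔥`, `v ∈ V`, then `S(e₋) = 0`, `S(x) ∈ 𝔤₋` for every `x ∈ V₀`, `S(e₊) ∈ 𝔭`,
`S(x)e₊ = −π₀(S(e₊))·x` for all `x ∈ V₀`; moreover `[π₀(𝔥), π₀(S(e₊))] = 0` and `π₀(𝔥)`
annihilates `π₋(S(e₊))`. -/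
theorem stmt5 (n : ℕ) (hn : 2 ≤ n) (h : LieSubalgebra ℝ (Module.End ℝ (Vm n)))
    (hsub : ∀ X ∈ h, IsSkewB n X ∧ X (eMinus n) = 0)
    (hgm : ∀ v : Fin n → ℝ, barE n v ∈ h)
    (hind : Indecomp n h)
    (S : Vm n →ₗ[ℝ] Module.End ℝ (Vm n))
    (hSskew : ∀ v : Vm n, IsSkewB n (S v))
    (hSeq : ∀ X ∈ h, ∀ v : Vm n, ⁅X, S v⁆ = S (X v)) :
    (S (eMinus n) = 0) ∧
    (∀ c : Fin n → ℝ, ∃ w : Fin n → ℝ, S (vmid n c) = barE n w) ∧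
    ((S (ePlus n)) (eMinus n) ∈ Submodule.span ℝ {eMinus n}) ∧
    (∀ c : Fin n → ℝ, (S (vmid n c)) (ePlus n) = - vmid n (pi0Act n (S (ePlus n)) c)) ∧
    (∀ X ∈ h, ∀ c : Fin n → ℝ,
      pi0Act n X (pi0Act n (S (ePlus n)) c) = pi0Act n (S (ePlus n)) (pi0Act n X c)) ∧
    (∀ X ∈ h, pi0Act n X (piMinusE n (S (ePlus n))) = 0) := by
  have hn1 : 1 ≤ n := le_trans one_le_two hn
  have heq : ∀ v : Fin n → ℝ, ∀ u : Vm n, ⁅barE n v, S u⁆ = S (barE n v u) :=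
    fun v u => hSeq (barE n v) (hgm v) u
  -- Part 1
  have hS0 : S (eMinus n) = 0 := seminus_zero hn S hSskew heq
  -- Each S eᵢ commutes with all barE v
  have hBcomm : ∀ i : Fin n, ∀ v u, barE n v (S (eMid n i) u) = S (eMid n i) (barE n v u) := by
    intro i v u
    have h1 := heq v (eMid n i)
    rw [barE_eMid, map_neg, map_smul, hS0, smul_zero, neg_zero] at h1
    have h2 : (⁅barE n v, S (eMid n i)⁆) u = 0 := by rw [h1]; rfl
    rw [lie_apply] at h2
    exact sub_eq_zero.mp h2
  have hBkey : ∀ i : Fin n, S (eMid n i) =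
      barE n (fun k => (S (eMid n i) (ePlus n)) (midIx n k)) :=
    fun i => key_commutant hn1 _ (hSskew _) (hBcomm i)
  have hBe0 : ∀ i : Fin n, S (eMid n i) (eMinus n) = 0 := by
    intro i; rw [hBkey i]; simp
  have hSv_e : ∀ c : Fin n → ℝ, S (vmid n c) (eMinus n) = 0 := by
    intro c
    rw [map_vmid S c]
    simp [LinearMap.sum_apply, LinearMap.smul_apply, hBe0]
  set E := S (ePlus n) with hEdef
  -- the bracket relation for E
  have hSvm : ∀ (c : Fin n → ℝ) (u : Vm n),
      S (vmid n c) u = barE n c (E u) - E (barE n c u) := by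
    intro c u
    have h1 := heq c (ePlus n)
    rw [barE_ePlus] at h1
    have h2 := congrArg (fun (f : Module.End ℝ (Vm n)) => f u) h1
    simp only [lie_apply] at h2
    exact h2.symm
  -- Part 3 : E e₋ = λ e₋
  have hEe : E (eMinus n) = (E (eMinus n)) 0 • eMinus n := by
    apply ker_barE hn1
    intro v
    have := hSvm v (eMinus n)
    rw [barE_eMinus, map_zero, sub_zero, hSv_e v] at this
    exact this.symm
  set lam : ℝ := (E (eMinus n)) 0 with hlam
  -- skew facts for E
  have hE1 : (E (ePlus n)) (lastIx n) = -lam := by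
    have := hSskew (ePlus n) (eMinus n) (ePlus n)
    simp only [wB_ePlus_right, wB_eMinus_left] at this
    rw [hEe] at this; simp at this; linarith
  have hE2 : (E (ePlus n)) 0 = 0 := by
    have := hSskew (ePlus n) (ePlus n) (ePlus n)
    simp only [wB_ePlus_right, wB_ePlus_left] at this; linarith
  have hE3 : ∀ i, (E (eMid n i)) (lastIx n) = 0 := by
    intro i
    have := hSskew (ePlus n) (eMinus n) (eMid n i)
    simp only [wB_eMid_right, wB_eMinus_left] at this
    rw [hEe] at this; simpa using this
  have hE4 : ∀ i, (E (eMid n i)) 0 = -(E (ePlus n)) (midIx n i) := by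
    intro i
    have := hSskew (ePlus n) (eMid n i) (ePlus n)
    simp only [wB_ePlus_right, wB_eMid_left] at this; linarith
  have hE5 : ∀ i j, (E (eMid n i)) (midIx n j) = -(E (eMid n j)) (midIx n i) := by
    intro i j
    have := hSskew (ePlus n) (eMid n i) (eMid n j)
    simp only [wB_eMid_right, wB_eMid_left] at this; linarith
  -- unfolded pi0Act for E
  have hpi0E : ∀ (c : Fin n → ℝ) (j : Fin n), pi0Act n E c j =
      lam * c j + ∑ i : Fin n, (E (eMid n i)) (midIx n j) * c i := by
    intro c j; simp [pi0Act, piR, hlam]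
  -- Claim 2
  have claim2 : ∀ c : Fin n → ℝ,
      S (vmid n c) = barE n (fun j => -(pi0Act n E c j)) := by
    intro c
    apply end_ext
    · rw [hSv_e c, barE_eMinus]
    · intro i
      have h1 : S (vmid n c) (eMid n i) = barE n c (E (eMid n i)) - E (barE n c (eMid n i)) :=
        hSvm c (eMid n i)
      rw [barE_eMid, map_neg, map_smul, hEe, barE_apply] at h1
      rw [h1, barE_eMid]
      apply vm_ext
      · simp only [Pi.sub_apply, Pi.smul_apply, Pi.neg_apply, smul_eq_mul,
          vmid_zero, eMinus_zero, hE3, hpi0E]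
        have : ∑ k : Fin n, c k * (E (eMid n i)) (midIx n k)
            = -∑ k : Fin n, (E (eMid n k)) (midIx n i) * c k := by
          rw [← Finset.sum_neg_distrib]
          exact Finset.sum_congr rfl fun k _ => by rw [hE5 i k]; ring
        simp [this]; ring
      · intro k
        simp [hE3]
      · simp [hE3]
    · have h1 : S (vmid n c) (ePlus n) = barE n c (E (ePlus n)) - E (vmid n c) :=
        by rw [hSvm c (ePlus n), barE_ePlus]
      rw [h1, barE_apply, barE_ePlus, map_vmid (E : Vm n →ₗ[ℝ] Vm n) c]
      apply vm_ext
      · simp only [Pi.sub_apply, Pi.smul_apply, smul_eq_mul, vmid_zero, eMinus_zero,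
          Finset.sum_apply]
        simp
        have hsum : ∑ x : Fin n, c x * E (eMid n x) 0
            = -∑ i : Fin n, c i * E (ePlus n) (midIx n i) := by
          rw [← Finset.sum_neg_distrib]
          exact Finset.sum_congr rfl fun x _ => by rw [hE4 x]; ring
        rw [hsum]; ring
      · intro j
        simp only [Pi.sub_apply, Pi.smul_apply, smul_eq_mul, vmid_mid, eMinus_mid,
          Finset.sum_apply]
        simp [hE1, hpi0E]
        have hsum2 : ∑ x : Fin n, c x * E (eMid n x) (midIx n j)
            = ∑ i : Fin n, E (eMid n i) (midIx n j) * c i :=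
          Finset.sum_congr rfl fun k _ => mul_comm _ _
        rw [hsum2]; ring
      · simp [hE3]
  -- Parts 5 and 6
  have key56 : ∀ X ∈ h,
      (∀ c, pi0Act n X (pi0Act n E c) = pi0Act n E (pi0Act n X c)) ∧
      (pi0Act n X (piMinusE n E) = 0) := by
    intro X hX
    obtain ⟨hXsk, hX0⟩ := hsub X hX
    have hXp0 : (X (ePlus n)) 0 = 0 := by
      have := hXsk (ePlus n) (ePlus n)
      simp only [wB_ePlus_right, wB_ePlus_left] at this; linarith
    have hXpl : (X (ePlus n)) (lastIx n) = 0 := by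
      have := hXsk (eMinus n) (ePlus n)
      simp only [wB_ePlus_right, wB_eMinus_left] at this
      rw [hX0] at this; simpa using this
    have hXil : ∀ i, (X (eMid n i)) (lastIx n) = 0 := by
      intro i
      have := hXsk (eMinus n) (eMid n i)
      simp only [wB_eMid_right, wB_eMinus_left] at this
      rw [hX0] at this; simpa using this
    have hXa : ∀ i j, (X (eMid n i)) (midIx n j) = -(X (eMid n j)) (midIx n i) := by
      intro i j
      have := hXsk (eMid n i) (eMid n j)
      simp only [wB_eMid_right, wB_eMid_left] at this; linarith
    set m : Fin n → ℝ := fun i => (X (ePlus n)) (midIx n i) with hm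
    have hXep : X (ePlus n) = vmid n m := by
      apply vm_ext <;> simp [hXp0, hXpl, hm]
    have hpiRX : piR n X = 0 := by simp [piR, hX0]
    have hpi0X : ∀ c j, pi0Act n X c j = ∑ i, (X (eMid n i)) (midIx n j) * c i := by
      intro c j; simp [pi0Act, hpiRX]
    have hMaster : ∀ u, X (E u) - E (X u) = barE n (fun j => -(pi0Act n E m j)) u := by
      intro u
      have h1 := hSeq X hX (ePlus n)
      rw [← hEdef, hXep, claim2 m] at h1
      have h2 := congrArg (fun (f : Module.End ℝ (Vm n)) => f u) h1
      simpa only [lie_apply] using h2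
    have hEj : ∀ j, E (eMid n j) = (E (eMid n j)) 0 • eMinus n
        + vmid n (fun k => (E (eMid n j)) (midIx n k)) := by
      intro j; apply vm_ext <;> simp [hE3]
    have hXj : ∀ j, X (eMid n j) = (X (eMid n j)) 0 • eMinus n
        + vmid n (fun k => (X (eMid n j)) (midIx n k)) := by
      intro j; apply vm_ext <;> simp [hXil]
    have R1 : ∀ j l, ∑ k : Fin n, (E (eMid n j)) (midIx n k) * (X (eMid n k)) (midIx n l)
        = ∑ k : Fin n, (X (eMid n j)) (midIx n k) * (E (eMid n k)) (midIx n l) := by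
      intro j l
      have h1 := hMaster (eMid n j)
      rw [hEj j, hXj j] at h1
      simp only [map_add, map_smul, hX0, smul_zero, zero_add,
        map_vmid (X : Vm n →ₗ[ℝ] Vm n), map_vmid (E : Vm n →ₗ[ℝ] Vm n), hEe, barE_eMid] at h1
      have h2 := congrFun h1 (midIx n l)
      simp [Finset.sum_apply, Pi.smul_apply, smul_eq_mul] at h2
      linarith [h2]
    constructor
    · -- Part 5
      intro c
      funext j
      rw [hpi0X, hpi0E]
      simp only [hpi0E, hpi0X]
      have e1 : ∑ i : Fin n, (X (eMid n i)) (midIx n j) *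
            (lam * c i + ∑ k : Fin n, (E (eMid n k)) (midIx n i) * c k)
          = (∑ i : Fin n, lam * ((X (eMid n i)) (midIx n j) * c i)) +
            ∑ i : Fin n, (X (eMid n i)) (midIx n j) *
              ∑ k : Fin n, (E (eMid n k)) (midIx n i) * c k := by
        rw [← Finset.sum_add_distrib]
        exact Finset.sum_congr rfl fun i _ => by ring
      have lhs_eq : ∀ (P Q : Fin n → Fin n → ℝ),
          ∑ i : Fin n, P i j * ∑ k : Fin n, Q k i * c k
            = ∑ k : Fin n, (∑ i : Fin n, Q k i * P i j) * c k := by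
        intro P Q
        simp only [Finset.mul_sum, Finset.sum_mul]
        rw [Finset.sum_comm]
        exact Finset.sum_congr rfl fun k _ => Finset.sum_congr rfl fun i _ => by ring
      have main : ∑ i : Fin n, (X (eMid n i)) (midIx n j) *
            ∑ k : Fin n, (E (eMid n k)) (midIx n i) * c k
          = ∑ i : Fin n, (E (eMid n i)) (midIx n j) *
            ∑ k : Fin n, (X (eMid n k)) (midIx n i) * c k := by
        rw [lhs_eq (fun i j => (X (eMid n i)) (midIx n j))
            (fun k i => (E (eMid n k)) (midIx n i)),
          lhs_eq (fun i j => (E (eMid n i)) (midIx n j))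
            (fun k i => (X (eMid n k)) (midIx n i))]
        exact Finset.sum_congr rfl fun k _ => by rw [R1 k j]
      rw [e1, main, Finset.mul_sum]
    · -- Part 6
      have hEp : E (ePlus n) = vmid n (fun i => (E (ePlus n)) (midIx n i))
          + (-lam) • ePlus n := by
        apply vm_ext <;> simp [hE1, hE2]
      have h1 := hMaster (ePlus n)
      rw [hEp] at h1
      simp only [map_add, map_smul] at h1
      rw [hXep] at h1
      simp only [map_vmid (X : Vm n →ₗ[ℝ] Vm n), map_vmid (E : Vm n →ₗ[ℝ] Vm n),
        barE_ePlus] at h1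
      funext j
      have h2 := congrFun h1 (midIx n j)
      simp [Finset.sum_apply, Pi.smul_apply, smul_eq_mul, hpi0E] at h2
      rw [hpi0X]
      have hpm : ∀ i, piMinusE n E i = (E (ePlus n)) (midIx n i) := by
        intro i; simp [piMinusE]
      simp only [hpm, Pi.zero_apply]
      have s1 : ∑ x : Fin n, m x * E (eMid n x) (midIx n j)
          = ∑ i : Fin n, E (eMid n i) (midIx n j) * m i :=
        Finset.sum_congr rfl fun k _ => mul_comm _ _
      have s2 : ∑ x : Fin n, E (ePlus n) (midIx n x) * X (eMid n x) (midIx n j) = 0 := by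
        rw [s1] at h2; linarith [h2]
      rw [show (∑ i : Fin n, X (eMid n i) (midIx n j) * E (ePlus n) (midIx n i))
          = ∑ x : Fin n, E (ePlus n) (midIx n x) * X (eMid n x) (midIx n j) from
        Finset.sum_congr rfl fun k _ => mul_comm _ _]
      exact s2
  refine ⟨hS0, fun c => ⟨_, claim2 c⟩, ?_, ?_, fun X hX => (key56 X hX).1, fun X hX => (key56 X hX).2⟩
  · rw [hEe]
    exact Submodule.smul_mem _ _ (Submodule.mem_span_singleton_self _)
  · intro c
    rw [claim2 c, barE_ePlus]
    apply vm_ext <;> simp
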